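/- (Multicalibration restricts to subsets) If the partition S is α-approximately multicalibrated for C under D in the sense Σ_i |E_D[1_{S_i}(x)·c(x)·(y − p_i)]| ≤ α for all c ∈ C, and C contains the indicator of X' ⊆ X and is closed under multiplication by this indicator, then the restricted partition S'_i = S_i ∩ X' is α'-approximately multicalibrated for the restricted class under D' = D | (x ∈ X'), with α' = (1 + ‖C‖_∞)·α / D(X'). -/

import Mathlib

open Finset

variable {X : Type*} [Fintype X] [DecidableEq X] {m : ℕ}

/-- Probability mass `D(S_i)` of state `i` of the partition given by `σ`. -/
noncomputable def smass (D : X → Bool → ℝ) (σ : X → Fin m) (i : Fin m) : ℝ :=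
  ∑ x, ∑ b, if σ x = i then D x b else 0

/-- `p_i = E_{D_i}[y]`. -/
noncomputable def pstate (D : X → Bool → ℝ) (σ : X → Fin m) (i : Fin m) : ℝ :=
  (∑ x, if σ x = i then D x true else 0) / smass D σ i

/-- `E_D[1_{S_i}(x)·c(x)·(y − q)]`. -/
noncomputable def calTerm (D : X → Bool → ℝ) (σ : X → Fin m) (i : Fin m)
    (c : X → ℝ) (q : ℝ) : ℝ :=
  ∑ x, ∑ b, if σ x = i then D x b * c x * ((if b then 1 else 0) - q) else 0

/-- Mass of `S_i ∩ X'`. -/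
noncomputable def massInt (D : X → Bool → ℝ) (σ : X → Fin m) (X' : Finset X)
    (i : Fin m) : ℝ :=
  ∑ x, ∑ b, if σ x = i ∧ x ∈ X' then D x b else 0

/-- `p'_i = E[y | x ∈ S_i ∩ X']`. -/
noncomputable def pstateInt (D : X → Bool → ℝ) (σ : X → Fin m) (X' : Finset X)
    (i : Fin m) : ℝ :=
  (∑ x, if σ x = i ∧ x ∈ X' then D x true else 0) / massInt D σ X' i

/-- `E_{D'}[1_{S'_i}(x)·c'(x)·(y − q)]` where `D' = D | (x ∈ X')` and `S'_i = S_i ∩ X'`. -/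
noncomputable def calTermInt (D : X → Bool → ℝ) (σ : X → Fin m) (X' : Finset X)
    (i : Fin m) (c : X → ℝ) (q : ℝ) : ℝ :=
  (∑ x, ∑ b, if σ x = i ∧ x ∈ X' then D x b * c x * ((if b then 1 else 0) - q) else 0)
    / (∑ x ∈ X', ∑ b, D x b)

/-- `calTerm` is affine in `q`. -/
lemma calTerm_eq (D : X → Bool → ℝ) (σ : X → Fin m) (i : Fin m) (c : X → ℝ) (q : ℝ) :
    calTerm D σ i c q =
      (∑ x, if σ x = i then D x true * c x else 0)
        - q * (∑ x, if σ x = i then (D x true + D x false) * c x else 0) := by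
  unfold calTerm
  rw [Finset.mul_sum, ← Finset.sum_sub_distrib]
  refine Finset.sum_congr rfl fun x _ => ?_
  rw [Fintype.sum_bool]
  by_cases h : σ x = i <;> simp [h] <;> ring

lemma massInt_eq (D : X → Bool → ℝ) (σ : X → Fin m) (X' : Finset X) (i : Fin m) :
    massInt D σ X' i = ∑ x, if σ x = i ∧ x ∈ X' then D x true + D x false else 0 := by
  unfold massInt
  refine Finset.sum_congr rfl fun x _ => ?_
  rw [Fintype.sum_bool]
  split_ifs <;> simp

/-- Multicalibration restricts to subsets: if `S` is `α`-approximately multicalibrated for a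
class `C` containing the indicator of `X'` and closed under multiplication by it, then the
restricted partition `S_i ∩ X'` is `(1+‖C‖_∞)α/D(X')`-approximately multicalibrated under
`D' = D | (x ∈ X')` for every `c' ∈ C` supported on `X'`. -/
theorem multicalibration_restricts {X : Type*} [Fintype X] [DecidableEq X] {m : ℕ}
    (D : X → Bool → ℝ) (hD : ∀ x b, 0 ≤ D x b) (hD1 : ∑ x, ∑ b, D x b = 1)
    (σ : X → Fin m) (C : Set (X → ℝ)) (α Cinf : ℝ) (X' : Finset X)
    (hmc : ∀ c ∈ C, ∑ i, |calTerm D σ i c (pstate D σ i)| ≤ α)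
    (hind : (fun x => if x ∈ X' then (1:ℝ) else 0) ∈ C)
    (hclosed : ∀ c ∈ C, (fun x => (if x ∈ X' then (1:ℝ) else 0) * c x) ∈ C)
    (hbound : ∀ c ∈ C, ∀ x, |c x| ≤ Cinf)
    (hpos : 0 < ∑ x ∈ X', ∑ b, D x b) :
    ∀ c' ∈ C, (∀ x, x ∉ X' → c' x = 0) →
      ∑ i, |calTermInt D σ X' i c' (pstateInt D σ X' i)|
        ≤ (1 + Cinf) * α / (∑ x ∈ X', ∑ b, D x b) := by
  intro c' hc' hsupp
  set M : ℝ := ∑ x ∈ X', ∑ b, D x b with hM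
  set ind : X → ℝ := fun x => if x ∈ X' then (1:ℝ) else 0 with hindDef
  have hα : 0 ≤ α :=
    le_trans (Finset.sum_nonneg fun i _ => abs_nonneg _) (hmc c' hc')
  -- X' is nonempty, hence Cinf ≥ 1 ≥ 0
  have hX' : ∃ x, x ∈ X' := by
    by_contra h
    push_neg at h
    have : M = 0 := by
      rw [hM]
      exact Finset.sum_eq_zero fun x hx => absurd hx (h x)
    linarith
  have hCinf : 0 ≤ Cinf := by
    obtain ⟨x, hx⟩ := hX'
    have := hbound _ hind x
    simp only [hindDef, hx, if_pos] at this
    have h1 : |(1:ℝ)| = 1 := abs_one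
    linarith [abs_nonneg (ind x)]
  have hm' : ∀ i, 0 ≤ massInt D σ X' i := by
    intro i
    rw [massInt_eq]
    refine Finset.sum_nonneg fun x _ => ?_
    split_ifs
    · have := hD x true; have := hD x false; linarith
    · exact le_refl 0
  -- key per-state inequality
  have key : ∀ i, |calTerm D σ i c' (pstateInt D σ X' i)|
      ≤ |calTerm D σ i c' (pstate D σ i)| + Cinf * |calTerm D σ i ind (pstate D σ i)| := by
    intro i
    set p := pstate D σ i
    set p' := pstateInt D σ X' i
    set B : ℝ := ∑ x, if σ x = i then (D x true + D x false) * c' x else 0 with hB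
    have h1 : calTerm D σ i c' p' = calTerm D σ i c' p + (p - p') * B := by
      rw [calTerm_eq, calTerm_eq]; ring
    -- restrict B to X'
    have hBrestr : B = ∑ x, if σ x = i ∧ x ∈ X' then (D x true + D x false) * c' x else 0 := by
      refine Finset.sum_congr rfl fun x _ => ?_
      by_cases hx : x ∈ X'
      · simp [hx]
      · simp [hx, hsupp x hx]
    have hBabs : |B| ≤ Cinf * massInt D σ X' i := by
      rw [hBrestr, massInt_eq, Finset.mul_sum]
      refine le_trans (Finset.abs_sum_le_sum_abs _ _) (Finset.sum_le_sum fun x _ => ?_)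
      split_ifs with h
      · rw [abs_mul]
        have hnn : 0 ≤ D x true + D x false := by
          have := hD x true; have := hD x false; linarith
        rw [abs_of_nonneg hnn, mul_comm (Cinf)]
        exact mul_le_mul_of_nonneg_left (hbound c' hc' x) hnn
      · simp
    -- calTerm at indicator equals (p' - p) * massInt
    have hTm : calTerm D σ i ind (pstate D σ i) = (p' - p) * massInt D σ X' i := by
      have hA : (∑ x, if σ x = i then D x true * ind x else 0)
          = ∑ x, if σ x = i ∧ x ∈ X' then D x true else 0 := by
        refine Finset.sum_congr rfl fun x _ => ?_
        by_cases hx : x ∈ X' <;> simp [hindDef, hx]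
      have hBi : (∑ x, if σ x = i then (D x true + D x false) * ind x else 0)
          = massInt D σ X' i := by
        rw [massInt_eq]
        refine Finset.sum_congr rfl fun x _ => ?_
        by_cases hx : x ∈ X' <;> simp [hindDef, hx]
      rw [calTerm_eq, hA, hBi]
      have hT' : (∑ x, if σ x = i ∧ x ∈ X' then D x true else 0)
          = p' * massInt D σ X' i := by
        by_cases hz : massInt D σ X' i = 0
        · have hle : (∑ x, if σ x = i ∧ x ∈ X' then D x true else 0)
              ≤ massInt D σ X' i := by
            rw [massInt_eq]
            refine Finset.sum_le_sum fun x _ => ?_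
            split_ifs
            · have := hD x false; linarith
            · exact le_refl 0
          have hge : 0 ≤ (∑ x, if σ x = i ∧ x ∈ X' then D x true else 0) := by
            refine Finset.sum_nonneg fun x _ => ?_
            split_ifs
            · exact hD x true
            · exact le_refl 0
          rw [hz] at hle
          have : (∑ x, if σ x = i ∧ x ∈ X' then D x true else 0) = 0 := le_antisymm hle hge
          rw [this, hz, mul_zero]
        · show _ = pstateInt D σ X' i * massInt D σ X' i
          unfold pstateInt
          field_simp
      rw [hT']
      ring
    rw [h1, hTm]
    have habs2 : |(p - p') * B| ≤ Cinf * |(p' - p) * massInt D σ X' i| := by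
      rw [abs_mul, abs_mul, abs_of_nonneg (hm' i)]
      have : |p - p'| = |p' - p| := abs_sub_comm _ _
      rw [this]
      calc |p' - p| * |B| ≤ |p' - p| * (Cinf * massInt D σ X' i) :=
            mul_le_mul_of_nonneg_left hBabs (abs_nonneg _)
        _ = Cinf * (|p' - p| * massInt D σ X' i) := by ring
    calc |calTerm D σ i c' p + (p - p') * B|
        ≤ |calTerm D σ i c' p| + |(p - p') * B| := abs_add_le _ _
      _ ≤ |calTerm D σ i c' p| + Cinf * |(p' - p) * massInt D σ X' i| := by linarith
  -- restricted numerator equals calTerm for supported c'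
  have hnum : ∀ i q, calTermInt D σ X' i c' q = calTerm D σ i c' q / M := by
    intro i q
    unfold calTermInt calTerm
    congr 1
    refine Finset.sum_congr rfl fun x _ => Finset.sum_congr rfl fun b _ => ?_
    by_cases hx : x ∈ X'
    · simp [hx]
    · simp [hx, hsupp x hx]
  have hsum : ∑ i, |calTermInt D σ X' i c' (pstateInt D σ X' i)|
      = (∑ i, |calTerm D σ i c' (pstateInt D σ X' i)|) / M := by
    rw [Finset.sum_div]
    refine Finset.sum_congr rfl fun i _ => ?_
    rw [hnum, abs_div, abs_of_pos hpos]
  rw [hsum]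
  have hfinal : (∑ i, |calTerm D σ i c' (pstateInt D σ X' i)|) ≤ (1 + Cinf) * α := by
    calc (∑ i, |calTerm D σ i c' (pstateInt D σ X' i)|)
        ≤ ∑ i, (|calTerm D σ i c' (pstate D σ i)|
            + Cinf * |calTerm D σ i ind (pstate D σ i)|) :=
          Finset.sum_le_sum fun i _ => key i
      _ = (∑ i, |calTerm D σ i c' (pstate D σ i)|)
            + Cinf * (∑ i, |calTerm D σ i ind (pstate D σ i)|) := by
          rw [Finset.sum_add_distrib, Finset.mul_sum]
      _ ≤ α + Cinf * α := by
          have h1 := hmc c' hc'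
          have h2 := hmc ind hind
          have := mul_le_mul_of_nonneg_left h2 hCinf
          linarith
      _ = (1 + Cinf) * α := by ring
  gcongr
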